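/- If two mincuts X = ⟨A,Ā⟩ and Y = ⟨B,B̄⟩ of a simple connected graph G cross, then the edge-connectivity λ(G) is even. -/
import Mathlib


open SimpleGraph

/-- `X` is an edge-cut of the connected graph `G`: a set of edges of `G` whose
deletion disconnects `G`. -/
def IsEdgeCut {V : Type*} (G : SimpleGraph V) (X : Finset (Sym2 V)) : Prop :=
  G.Connected ∧ ↑X ⊆ G.edgeSet ∧ ¬(G.deleteEdges ↑X).Connected

/-- The edge-connectivity `λ(G)`: the minimum cardinality of an edge-cut. -/
noncomputable def edgeConn {V : Type*} (G : SimpleGraph V) : ℕ :=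
  sInf {n | ∃ X : Finset (Sym2 V), X.card = n ∧ IsEdgeCut G X}

/-- A mincut is an edge-cut of minimum cardinality. -/
def IsMincut {V : Type*} (G : SimpleGraph V) (X : Finset (Sym2 V)) : Prop :=
  IsEdgeCut G X ∧ X.card = edgeConn G

/-- The mincut graph `X(G)`: the intersection graph of the mincuts of `G`. -/
def mincutGraph {V : Type*} [DecidableEq V] (G : SimpleGraph V) :
    SimpleGraph {X : Finset (Sym2 V) // IsMincut G X} :=
  SimpleGraph.fromRel (fun X Y => (X.1 ∩ Y.1).Nonempty)

/-- A mincut is trivial if it is the set of edges incident on a single vertex. -/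
def IsTrivialMincut {V : Type*} (G : SimpleGraph V) (X : Finset (Sym2 V)) : Prop :=
  IsMincut G X ∧ ∃ v : V, ↑X = G.incidenceSet v

/-- `MincutSides G X A` says `X` is a mincut of `G` whose two sides are `A` and `Aᶜ`,
i.e. `X = ⟨A, Ā⟩`. -/
def MincutSides {V : Type*} (G : SimpleGraph V) (X : Finset (Sym2 V)) (A : Set V) : Prop :=
  IsMincut G X ∧ A.Nonempty ∧ Aᶜ.Nonempty ∧
  (↑X = {e | e ∈ G.edgeSet ∧ ∃ a ∈ A, ∃ b ∈ Aᶜ, e = s(a, b)}) ∧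
  (G.induce A).Connected ∧ (G.induce Aᶜ).Connected

/-- Two mincuts with sides `A` and `B` cross (overlap). -/
def Crossing {V : Type*} (A B : Set V) : Prop :=
  (A ∩ B).Nonempty ∧ (Aᶜ ∩ B).Nonempty ∧ (A ∩ Bᶜ).Nonempty ∧ (Aᶜ ∩ Bᶜ).Nonempty

/-- The number of edges of `G` with one endpoint in `S` and the other in `T`. -/
noncomputable def betweenEdges {V : Type*} (G : SimpleGraph V) (S T : Set V) : ℕ :=
  {e | e ∈ G.edgeSet ∧ ∃ a ∈ S, ∃ b ∈ T, e = s(a, b)}.ncard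

section AuxLemmas

set_option linter.unusedSectionVars false

variable {V : Type*} [Fintype V]

/-- The set of edges of `G` with one endpoint in `S` and the other in `T`. -/
def crossSet (G : SimpleGraph V) (S T : Set V) : Set (Sym2 V) :=
  {e | e ∈ G.edgeSet ∧ ∃ a ∈ S, ∃ b ∈ T, e = s(a, b)}

lemma betweenEdges_eq (G : SimpleGraph V) (S T : Set V) :
    betweenEdges G S T = (crossSet G S T).ncard := rfl

lemma crossSet_comm (G : SimpleGraph V) (S T : Set V) :
    crossSet G S T = crossSet G T S := by
  ext e
  simp only [crossSet, Set.mem_setOf_eq]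
  constructor <;> rintro ⟨he, a, ha, b, hb, rfl⟩ <;>
    exact ⟨he, b, hb, a, ha, Sym2.eq_swap⟩

lemma betweenEdges_comm (G : SimpleGraph V) (S T : Set V) :
    betweenEdges G S T = betweenEdges G T S := by
  rw [betweenEdges_eq, betweenEdges_eq, crossSet_comm]

lemma crossSet_union_left (G : SimpleGraph V) (S₁ S₂ T : Set V) :
    crossSet G (S₁ ∪ S₂) T = crossSet G S₁ T ∪ crossSet G S₂ T := by
  ext e
  simp only [crossSet, Set.mem_setOf_eq, Set.mem_union]
  constructor
  · rintro ⟨he, a, (ha | ha), b, hb, rfl⟩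
    exacts [Or.inl ⟨he, a, ha, b, hb, rfl⟩, Or.inr ⟨he, a, ha, b, hb, rfl⟩]
  · rintro (⟨he, a, ha, b, hb, rfl⟩ | ⟨he, a, ha, b, hb, rfl⟩)
    exacts [⟨he, a, Or.inl ha, b, hb, rfl⟩, ⟨he, a, Or.inr ha, b, hb, rfl⟩]

lemma crossSet_disjoint (G : SimpleGraph V) {S₁ S₂ T : Set V}
    (h12 : Disjoint S₁ S₂) (h1T : Disjoint S₁ T) :
    Disjoint (crossSet G S₁ T) (crossSet G S₂ T) := by
  rw [Set.disjoint_left]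
  rintro e ⟨he, a, ha, b, hb, rfl⟩ ⟨_, a', ha', b', hb', h⟩
  rcases Sym2.eq_iff.mp h with ⟨rfl, rfl⟩ | ⟨rfl, rfl⟩
  · exact (Set.disjoint_left.mp h12 ha) ha'
  · exact (Set.disjoint_left.mp h1T ha) hb'

lemma betweenEdges_union_left (G : SimpleGraph V) {S₁ S₂ T : Set V}
    (h12 : Disjoint S₁ S₂) (h1T : Disjoint S₁ T) :
    betweenEdges G (S₁ ∪ S₂) T = betweenEdges G S₁ T + betweenEdges G S₂ T := by
  rw [betweenEdges_eq, betweenEdges_eq, betweenEdges_eq, crossSet_union_left,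
    Set.ncard_union_eq (crossSet_disjoint G h12 h1T) (Set.toFinite _) (Set.toFinite _)]

lemma betweenEdges_union_right (G : SimpleGraph V) {S T₁ T₂ : Set V}
    (h12 : Disjoint T₁ T₂) (h1S : Disjoint T₁ S) :
    betweenEdges G S (T₁ ∪ T₂) = betweenEdges G S T₁ + betweenEdges G S T₂ := by
  rw [betweenEdges_comm, betweenEdges_union_left G h12 h1S,
    betweenEdges_comm G T₁ S, betweenEdges_comm G T₂ S]

lemma edgeConn_le_betweenEdges (G : SimpleGraph V)
    (hG : G.Connected) {S : Set V} (hS : S.Nonempty) (hSc : Sᶜ.Nonempty) :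
    edgeConn G ≤ betweenEdges G S Sᶜ := by
  classical
  obtain ⟨a, ha⟩ := hS
  obtain ⟨b, hb⟩ := hSc
  have hfin : (crossSet G S Sᶜ).Finite := Set.toFinite _
  apply Nat.sInf_le
  refine ⟨hfin.toFinset, ?_, hG, ?_, ?_⟩
  · rw [betweenEdges_eq, ← Set.ncard_coe_finset, hfin.coe_toFinset]
  · rw [hfin.coe_toFinset]
    exact fun e he => he.1
  · intro hcon
    obtain ⟨p⟩ := hcon.preconnected a b
    obtain ⟨d, hd, hdS, hdSc⟩ := p.exists_boundary_dart S ha hb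
    have hadj := d.adj
    rw [deleteEdges_adj] at hadj
    simp only [Finset.mem_coe, Set.Finite.mem_toFinset] at hadj
    exact hadj.2 ⟨G.mem_edgeSet.mpr hadj.1, d.toProd.1, hdS, d.toProd.2, hdSc, rfl⟩

end AuxLemmas

/-- If two mincuts of `G` cross, then `λ(G)` is even. -/
theorem stmt_7 {V : Type*} [Fintype V] [DecidableEq V] (G : SimpleGraph V)
    (X Y : Finset (Sym2 V)) (A B : Set V)
    (hX : MincutSides G X A) (hY : MincutSides G Y B) (hcross : Crossing A B) :
    Even (edgeConn G) := by
  classical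
  have hG : G.Connected := hX.1.1.1
  -- cardinalities of the two mincuts
  have hXval : betweenEdges G A Aᶜ = edgeConn G := by
    have h1 : (↑X : Set (Sym2 V)) = crossSet G A Aᶜ := hX.2.2.2.1
    rw [betweenEdges_eq, ← h1, Set.ncard_coe_finset]
    exact hX.1.2
  have hYval : betweenEdges G B Bᶜ = edgeConn G := by
    have h1 : (↑Y : Set (Sym2 V)) = crossSet G B Bᶜ := hY.2.2.2.1
    rw [betweenEdges_eq, ← h1, Set.ncard_coe_finset]
    exact hY.1.2
  -- disjointness helpers
  have djA : ∀ S T : Set V, Disjoint (A ∩ S) (Aᶜ ∩ T) := fun S T =>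
    Disjoint.mono Set.inter_subset_left Set.inter_subset_left disjoint_compl_right
  have djB : ∀ S T : Set V, Disjoint (S ∩ B) (T ∩ Bᶜ) := fun S T =>
    Disjoint.mono Set.inter_subset_right Set.inter_subset_right disjoint_compl_right
  -- complement decompositions
  have hPc : (A ∩ B)ᶜ = (A ∩ Bᶜ) ∪ ((Aᶜ ∩ B) ∪ (Aᶜ ∩ Bᶜ)) := by
    ext x; simp only [Set.mem_compl_iff, Set.mem_inter_iff, Set.mem_union]; tauto
  have hQc : (A ∩ Bᶜ)ᶜ = (A ∩ B) ∪ ((Aᶜ ∩ B) ∪ (Aᶜ ∩ Bᶜ)) := by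
    ext x; simp only [Set.mem_compl_iff, Set.mem_inter_iff, Set.mem_union]; tauto
  have hRc : (Aᶜ ∩ B)ᶜ = (A ∩ B) ∪ ((A ∩ Bᶜ) ∪ (Aᶜ ∩ Bᶜ)) := by
    ext x; simp only [Set.mem_compl_iff, Set.mem_inter_iff, Set.mem_union]; tauto
  have hSc : (Aᶜ ∩ Bᶜ)ᶜ = (A ∩ B) ∪ ((A ∩ Bᶜ) ∪ (Aᶜ ∩ B)) := by
    ext x; simp only [Set.mem_compl_iff, Set.mem_inter_iff, Set.mem_union]; tauto
  have hBdec : (A ∩ B) ∪ (Aᶜ ∩ B) = B := by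
    ext x; simp only [Set.mem_compl_iff, Set.mem_inter_iff, Set.mem_union]; tauto
  have hBcdec : (A ∩ Bᶜ) ∪ (Aᶜ ∩ Bᶜ) = Bᶜ := by
    ext x; simp only [Set.mem_compl_iff, Set.mem_inter_iff, Set.mem_union]; tauto
  -- expansion of mincut X into quadrant counts
  have eX : betweenEdges G A Aᶜ =
      betweenEdges G (A ∩ B) (Aᶜ ∩ B) + betweenEdges G (A ∩ B) (Aᶜ ∩ Bᶜ) +
      (betweenEdges G (A ∩ Bᶜ) (Aᶜ ∩ B) + betweenEdges G (A ∩ Bᶜ) (Aᶜ ∩ Bᶜ)) := by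
    have h0 : betweenEdges G A Aᶜ =
        betweenEdges G ((A ∩ B) ∪ (A ∩ Bᶜ)) ((Aᶜ ∩ B) ∪ (Aᶜ ∩ Bᶜ)) := by
      rw [Set.inter_union_compl, Set.inter_union_compl]
    rw [h0,
      betweenEdges_union_left G (djB A A)
        (Set.disjoint_union_right.mpr ⟨djA B B, djA B Bᶜ⟩),
      betweenEdges_union_right G (djB Aᶜ Aᶜ) (djA B B).symm,
      betweenEdges_union_right G (djB Aᶜ Aᶜ) (djA Bᶜ B).symm]
  -- expansion of mincut Y into quadrant counts
  have eY : betweenEdges G B Bᶜ =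
      betweenEdges G (A ∩ B) (A ∩ Bᶜ) + betweenEdges G (A ∩ B) (Aᶜ ∩ Bᶜ) +
      (betweenEdges G (Aᶜ ∩ B) (A ∩ Bᶜ) + betweenEdges G (Aᶜ ∩ B) (Aᶜ ∩ Bᶜ)) := by
    have h0 : betweenEdges G B Bᶜ =
        betweenEdges G ((A ∩ B) ∪ (Aᶜ ∩ B)) ((A ∩ Bᶜ) ∪ (Aᶜ ∩ Bᶜ)) := by
      rw [hBdec, hBcdec]
    rw [h0,
      betweenEdges_union_left G (djA B B)
        (Set.disjoint_union_right.mpr ⟨djB A A, djA B Bᶜ⟩),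
      betweenEdges_union_right G (djA Bᶜ Bᶜ) (djB A A).symm,
      betweenEdges_union_right G (djA Bᶜ Bᶜ) (djA Bᶜ B)]
  -- corner cuts
  have eP : betweenEdges G (A ∩ B) (A ∩ B)ᶜ =
      betweenEdges G (A ∩ B) (A ∩ Bᶜ) +
      (betweenEdges G (A ∩ B) (Aᶜ ∩ B) + betweenEdges G (A ∩ B) (Aᶜ ∩ Bᶜ)) := by
    rw [hPc,
      betweenEdges_union_right G
        (Set.disjoint_union_right.mpr ⟨djA Bᶜ B, djA Bᶜ Bᶜ⟩) (djB A A).symm,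
      betweenEdges_union_right G (djB Aᶜ Aᶜ) (djA B B).symm]
  have eQ : betweenEdges G (A ∩ Bᶜ) (A ∩ Bᶜ)ᶜ =
      betweenEdges G (A ∩ Bᶜ) (A ∩ B) +
      (betweenEdges G (A ∩ Bᶜ) (Aᶜ ∩ B) + betweenEdges G (A ∩ Bᶜ) (Aᶜ ∩ Bᶜ)) := by
    rw [hQc,
      betweenEdges_union_right G
        (Set.disjoint_union_right.mpr ⟨djA B B, djA B Bᶜ⟩) (djB A A),
      betweenEdges_union_right G (djB Aᶜ Aᶜ) (djA Bᶜ B).symm]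
  have eR : betweenEdges G (Aᶜ ∩ B) (Aᶜ ∩ B)ᶜ =
      betweenEdges G (Aᶜ ∩ B) (A ∩ B) +
      (betweenEdges G (Aᶜ ∩ B) (A ∩ Bᶜ) + betweenEdges G (Aᶜ ∩ B) (Aᶜ ∩ Bᶜ)) := by
    rw [hRc,
      betweenEdges_union_right G
        (Set.disjoint_union_right.mpr ⟨djB A A, djA B Bᶜ⟩) (djA B B),
      betweenEdges_union_right G (djA Bᶜ Bᶜ) (djA Bᶜ B)]
  have eS : betweenEdges G (Aᶜ ∩ Bᶜ) (Aᶜ ∩ Bᶜ)ᶜ =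
      betweenEdges G (Aᶜ ∩ Bᶜ) (A ∩ B) +
      (betweenEdges G (Aᶜ ∩ Bᶜ) (A ∩ Bᶜ) + betweenEdges G (Aᶜ ∩ Bᶜ) (Aᶜ ∩ B)) := by
    rw [hSc,
      betweenEdges_union_right G
        (Set.disjoint_union_right.mpr ⟨djB A A, djA B B⟩) (djA B Bᶜ),
      betweenEdges_union_right G (djA Bᶜ B) (djA Bᶜ Bᶜ)]
  -- the corner cuts have size at least λ
  obtain ⟨p, hp⟩ := hcross.1
  obtain ⟨r, hr⟩ := hcross.2.1
  obtain ⟨q, hq⟩ := hcross.2.2.1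
  obtain ⟨s, hs⟩ := hcross.2.2.2
  have iP : edgeConn G ≤ betweenEdges G (A ∩ B) (A ∩ B)ᶜ :=
    edgeConn_le_betweenEdges G hG ⟨p, hp⟩ ⟨s, fun hc => hs.1 hc.1⟩
  have iQ : edgeConn G ≤ betweenEdges G (A ∩ Bᶜ) (A ∩ Bᶜ)ᶜ :=
    edgeConn_le_betweenEdges G hG ⟨q, hq⟩ ⟨p, fun hc => hc.2 hp.2⟩
  have iR : edgeConn G ≤ betweenEdges G (Aᶜ ∩ B) (Aᶜ ∩ B)ᶜ :=
    edgeConn_le_betweenEdges G hG ⟨r, hr⟩ ⟨p, fun hc => hc.1 hp.1⟩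
  have iS : edgeConn G ≤ betweenEdges G (Aᶜ ∩ Bᶜ) (Aᶜ ∩ Bᶜ)ᶜ :=
    edgeConn_le_betweenEdges G hG ⟨s, hs⟩ ⟨p, fun hc => hc.1 hp.1⟩
  -- symmetry normalizations
  have c1 : betweenEdges G (A ∩ Bᶜ) (A ∩ B) = betweenEdges G (A ∩ B) (A ∩ Bᶜ) :=
    betweenEdges_comm G _ _
  have c2 : betweenEdges G (Aᶜ ∩ B) (A ∩ B) = betweenEdges G (A ∩ B) (Aᶜ ∩ B) :=
    betweenEdges_comm G _ _
  have c3 : betweenEdges G (Aᶜ ∩ Bᶜ) (A ∩ B) = betweenEdges G (A ∩ B) (Aᶜ ∩ Bᶜ) :=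
    betweenEdges_comm G _ _
  have c4 : betweenEdges G (Aᶜ ∩ B) (A ∩ Bᶜ) = betweenEdges G (A ∩ Bᶜ) (Aᶜ ∩ B) :=
    betweenEdges_comm G _ _
  have c5 : betweenEdges G (Aᶜ ∩ Bᶜ) (A ∩ Bᶜ) = betweenEdges G (A ∩ Bᶜ) (Aᶜ ∩ Bᶜ) :=
    betweenEdges_comm G _ _
  have c6 : betweenEdges G (Aᶜ ∩ Bᶜ) (Aᶜ ∩ B) = betweenEdges G (Aᶜ ∩ B) (Aᶜ ∩ Bᶜ) :=
    betweenEdges_comm G _ _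
  exact ⟨betweenEdges G (A ∩ B) (Aᶜ ∩ B), by omega⟩
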